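/- Let V ∈ ℝ^{d×K} have orthonormal columns, Δ ∈ ℝ^{d×K} satisfy VVᵀΔ = Δ, and let V₁ ∈ ℝ^{d×K} have orthonormal columns with ‖VVᵀ − V₁V₁ᵀ‖_F ≤ 1/2. Then, with V₂ an orthonormal completion of V₁ (so V₁V₁ᵀ + V₂V₂ᵀ = I), we have ‖V₂ᵀΔ‖_F ≤ (1/2)‖Δ‖_F ≤ ‖V₁ᵀΔ‖_F. -/

import Mathlib

open Matrix

/-- Frobenius norm of a real matrix. -/
noncomputable def frob {a b : ℕ} (A : Matrix (Fin a) (Fin b) ℝ) : ℝ :=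
  Real.sqrt (∑ i, ∑ j, (A i j) ^ 2)

lemma frobSq_nonneg {a b : ℕ} (A : Matrix (Fin a) (Fin b) ℝ) :
    0 ≤ ∑ i, ∑ j, (A i j) ^ 2 := by positivity

lemma frob_nonneg {a b : ℕ} (A : Matrix (Fin a) (Fin b) ℝ) : 0 ≤ frob A :=
  Real.sqrt_nonneg _

lemma frob_sq {a b : ℕ} (A : Matrix (Fin a) (Fin b) ℝ) :
    frob A ^ 2 = ∑ i, ∑ j, (A i j) ^ 2 :=
  Real.sq_sqrt (frobSq_nonneg A)

lemma frobSq_eq_trace {a b : ℕ} (A : Matrix (Fin a) (Fin b) ℝ) :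
    ∑ i, ∑ j, (A i j) ^ 2 = Matrix.trace (Aᵀ * A) := by
  simp [Matrix.trace, Matrix.mul_apply, Matrix.diag, sq]
  exact Finset.sum_comm

lemma pyth {d K m n : ℕ} (V₁ : Matrix (Fin d) (Fin m) ℝ) (V₂ : Matrix (Fin d) (Fin n) ℝ)
    (hcomp : V₁ * V₁ᵀ + V₂ * V₂ᵀ = 1) (M : Matrix (Fin d) (Fin K) ℝ) :
    frob (V₁ᵀ * M) ^ 2 + frob (V₂ᵀ * M) ^ 2 = frob M ^ 2 := by
  rw [frob_sq, frob_sq, frob_sq, frobSq_eq_trace, frobSq_eq_trace, frobSq_eq_trace]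
  have h1 : (V₁ᵀ * M)ᵀ * (V₁ᵀ * M) = Mᵀ * (V₁ * V₁ᵀ) * M := by
    simp [Matrix.transpose_mul, Matrix.mul_assoc]
  have h2 : (V₂ᵀ * M)ᵀ * (V₂ᵀ * M) = Mᵀ * (V₂ * V₂ᵀ) * M := by
    simp [Matrix.transpose_mul, Matrix.mul_assoc]
  rw [h1, h2, ← Matrix.trace_add, ← Matrix.add_mul, ← Matrix.mul_add, hcomp, Matrix.mul_one]

lemma frobSq_mul_le {a b c : ℕ} (A : Matrix (Fin a) (Fin b) ℝ) (B : Matrix (Fin b) (Fin c) ℝ) :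
    ∑ i, ∑ j, ((A * B) i j) ^ 2 ≤ (∑ i, ∑ k, (A i k) ^ 2) * (∑ k, ∑ j, (B k j) ^ 2) := by
  have h : ∀ i j, ((A * B) i j) ^ 2 ≤ (∑ k, (A i k) ^ 2) * (∑ k, (B k j) ^ 2) := by
    intro i j
    rw [Matrix.mul_apply]
    exact Finset.sum_mul_sq_le_sq_mul_sq Finset.univ (A i ·) (B · j)
  calc ∑ i, ∑ j, ((A * B) i j) ^ 2
      ≤ ∑ i, ∑ j, (∑ k, (A i k) ^ 2) * (∑ k, (B k j) ^ 2) := by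
        apply Finset.sum_le_sum; intro i _; apply Finset.sum_le_sum; intro j _; exact h i j
    _ = (∑ i, ∑ k, (A i k) ^ 2) * (∑ k, ∑ j, (B k j) ^ 2) := by
        rw [Finset.sum_mul]; refine Finset.sum_congr rfl fun i _ => ?_
        rw [← Finset.mul_sum, Finset.sum_comm]

lemma frob_mul_le {a b c : ℕ} (A : Matrix (Fin a) (Fin b) ℝ) (B : Matrix (Fin b) (Fin c) ℝ) :
    frob (A * B) ≤ frob A * frob B := by
  rw [frob, frob, frob, ← Real.sqrt_mul (frobSq_nonneg A)]
  exact Real.sqrt_le_sqrt (frobSq_mul_le A B)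

lemma le_of_sq_le_sq' {x y : ℝ} (hx : 0 ≤ x) (hy : 0 ≤ y) (h : x ^ 2 ≤ y ^ 2) : x ≤ y := by
  nlinarith

/-- If the columns of `Δ` lie in the span of `V` and `‖VVᵀ − V₁V₁ᵀ‖_F ≤ 1/2`, then with
`V₂` completing `V₁`, we have `‖V₂ᵀΔ‖_F ≤ (1/2)‖Δ‖_F ≤ ‖V₁ᵀΔ‖_F`. -/
theorem projection_split_bound {d K : ℕ} (hK : 0 < K) (hKd : K < d)
    (V V₁ : Matrix (Fin d) (Fin K) ℝ) (V₂ : Matrix (Fin d) (Fin (d - K)) ℝ)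
    (Δ : Matrix (Fin d) (Fin K) ℝ)
    (hV : Vᵀ * V = 1) (hV₁ : V₁ᵀ * V₁ = 1) (hV₂ : V₂ᵀ * V₂ = 1)
    (hcomp : V₁ * V₁ᵀ + V₂ * V₂ᵀ = 1)
    (hΔ : V * Vᵀ * Δ = Δ)
    (hclose : frob (V * Vᵀ - V₁ * V₁ᵀ) ≤ 1 / 2) :
    frob (V₂ᵀ * Δ) ≤ (1 / 2) * frob Δ ∧ (1 / 2) * frob Δ ≤ frob (V₁ᵀ * Δ) := by
  -- V₂ᵀ V₁ = 0
  have h21 : V₂ᵀ * V₁ = 0 := by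
    have h : (V₂ᵀ * V₁) * (V₂ᵀ * V₁)ᵀ = 0 := by
      have := congrArg (fun M => V₂ᵀ * M * V₂) hcomp
      simp only [Matrix.mul_one, Matrix.add_mul, Matrix.mul_add] at this
      rw [show V₂ᵀ * (V₂ * V₂ᵀ) * V₂ = (V₂ᵀ * V₂) * (V₂ᵀ * V₂) by
        simp [Matrix.mul_assoc], hV₂, Matrix.mul_one] at this
      have h2 : V₂ᵀ * (V₁ * V₁ᵀ) * V₂ = 0 := by rwa [add_eq_right] at this
      calc (V₂ᵀ * V₁) * (V₂ᵀ * V₁)ᵀ = V₂ᵀ * (V₁ * V₁ᵀ) * V₂ := by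
            simp [Matrix.transpose_mul, Matrix.transpose_transpose, Matrix.mul_assoc]
        _ = 0 := h2
    have h' : (V₂ᵀ * V₁) * (V₂ᵀ * V₁)ᴴ = 0 := by
      rwa [Matrix.conjTranspose_eq_transpose_of_trivial]
    exact Matrix.self_mul_conjTranspose_eq_zero.mp h'
  -- representation of V₂ᵀ Δ
  have hrepr : V₂ᵀ * Δ = V₂ᵀ * ((V * Vᵀ - V₁ * V₁ᵀ) * Δ) := by
    rw [Matrix.sub_mul, Matrix.mul_sub, hΔ,
      show V₂ᵀ * (V₁ * V₁ᵀ * Δ) = (V₂ᵀ * V₁) * (V₁ᵀ * Δ) by simp [Matrix.mul_assoc],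
      h21, Matrix.zero_mul, sub_zero]
  -- contraction: frob (V₂ᵀ * M) ≤ frob M
  have hcontract : ∀ M : Matrix (Fin d) (Fin K) ℝ, frob (V₂ᵀ * M) ≤ frob M := by
    intro M
    have hp := pyth V₁ V₂ hcomp M
    refine le_of_sq_le_sq' (frob_nonneg _) (frob_nonneg _) ?_
    nlinarith [sq_nonneg (frob (V₁ᵀ * M))]
  -- first inequality
  have h1 : frob (V₂ᵀ * Δ) ≤ (1 / 2) * frob Δ := by
    calc frob (V₂ᵀ * Δ) = frob (V₂ᵀ * ((V * Vᵀ - V₁ * V₁ᵀ) * Δ)) := by rw [← hrepr]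
      _ ≤ frob ((V * Vᵀ - V₁ * V₁ᵀ) * Δ) := hcontract _
      _ ≤ frob (V * Vᵀ - V₁ * V₁ᵀ) * frob Δ := frob_mul_le _ _
      _ ≤ (1 / 2) * frob Δ := mul_le_mul_of_nonneg_right hclose (frob_nonneg Δ)
  refine ⟨h1, ?_⟩
  have hp := pyth V₁ V₂ hcomp Δ
  refine le_of_sq_le_sq' (mul_nonneg (by norm_num) (frob_nonneg Δ)) (frob_nonneg _) ?_
  nlinarith [frob_nonneg (V₂ᵀ * Δ), frob_nonneg Δ]
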